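/- Let f : [a, b] → ℝ be a continuous concave function on a compact interval with a < b, and let ε > 0. Then there exist finitely many points a = x₀ < x₁ < … < x_z = b such that the piecewise-affine function g(x) = min_{1 ≤ k ≤ z} L_k(x), where L_k is the secant (chord) line through (x_{k−1}, f(x_{k−1})) and (x_k, f(x_k)), satisfies 0 ≤ f(x) − g(x) ≤ ε for every x ∈ [a, b]. -/

import Mathlib

open Set

/-- Piecewise-affine secant under-approximation of a concave function (the guarantee
realized by the sandwich algorithm, equations 10–11 of the paper): a continuous
concave function on a compact interval `[a, b]` admits, for any `ε > 0`, a partition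
`a = x₀ < x₁ < … < x_z = b` such that the minimum of the secant lines through
consecutive points `(x_{k-1}, f x_{k-1})`, `(x_k, f x_k)` under-approximates `f` on
`[a, b]` with uniform error at most `ε`. -/

lemma secant_le_of_concave {s : Set ℝ} {f : ℝ → ℝ} (hconc : ConcaveOn ℝ s f)
    {p q t : ℝ} (hp : p ∈ s) (hq : q ∈ s) (hpq : p < q) (h1 : p ≤ t) (h2 : t ≤ q) :
    f p + (f q - f p) / (q - p) * (t - p) ≤ f t := by
  have hqp : (0:ℝ) < q - p := by linarith
  set μ : ℝ := (t - p) / (q - p) with hμ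
  have hμ0 : 0 ≤ μ := div_nonneg (by linarith) hqp.le
  have hμ1 : μ ≤ 1 := by rw [div_le_one hqp]; linarith
  have hcomb := hconc.2 hp hq (by linarith : (0:ℝ) ≤ 1 - μ) hμ0 (by ring)
  have heq : (1 - μ) • p + μ • q = t := by
    simp only [smul_eq_mul, hμ]; field_simp; ring
  rw [heq] at hcomb
  simp only [smul_eq_mul] at hcomb
  have key : (1 - μ) * f p + μ * f q = f p + (f q - f p) / (q - p) * (t - p) := by
    simp only [hμ]; field_simp; ring
  linarith [key.ge]

lemma secant_ge_of_concave_left {s : Set ℝ} {f : ℝ → ℝ} (hconc : ConcaveOn ℝ s f)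
    {p q t : ℝ} (hp : p ∈ s) (hq : q ∈ s) (ht : t ∈ s) (hpq : p < q) (h1 : t ≤ p) :
    f t ≤ f p + (f q - f p) / (q - p) * (t - p) := by
  rcases eq_or_lt_of_le h1 with rfl | h1
  · simp
  · have hs := hconc.slope_anti_adjacent ht hq h1 hpq
    have hpt : (0:ℝ) < p - t := by linarith
    have h2 : (f q - f p) / (q - p) * (p - t) ≤ f p - f t := (le_div_iff₀ hpt).mp hs
    have h3 : (f q - f p) / (q - p) * (t - p) = -((f q - f p) / (q - p) * (p - t)) := by ring
    linarith [h3.ge]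

lemma secant_ge_of_concave_right {s : Set ℝ} {f : ℝ → ℝ} (hconc : ConcaveOn ℝ s f)
    {p q t : ℝ} (hp : p ∈ s) (hq : q ∈ s) (ht : t ∈ s) (hpq : p < q) (h1 : q ≤ t) :
    f t ≤ f p + (f q - f p) / (q - p) * (t - p) := by
  have hqp : (0:ℝ) < q - p := by linarith
  have hc : (f q - f p) / (q - p) * (q - p) = f q - f p :=
    div_mul_cancel₀ _ (ne_of_gt hqp)
  rcases eq_or_lt_of_le h1 with rfl | h1
  · linarith [hc.ge]
  · have hs := hconc.slope_anti_adjacent hp ht hpq h1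
    have htq : (0:ℝ) < t - q := by linarith
    have h2 : f t - f q ≤ (f q - f p) / (q - p) * (t - q) := (div_le_iff₀ htq).mp hs
    have h3 : (f q - f p) / (q - p) * (t - p) =
        (f q - f p) / (q - p) * (q - p) + (f q - f p) / (q - p) * (t - q) := by ring
    linarith [h3.ge, hc.ge]

lemma secant_close {f : ℝ → ℝ} {p q t ε : ℝ} (hpq : p < q) (h1 : p ≤ t) (h2 : t ≤ q)
    (hfp : f t - f p ≤ ε) (hfq : f t - f q ≤ ε) :
    f t - (f p + (f q - f p) / (q - p) * (t - p)) ≤ ε := by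
  have hqp : (0:ℝ) < q - p := by linarith
  have key : (f q - f p) / (q - p) * (q - p) = f q - f p :=
    div_mul_cancel₀ _ (ne_of_gt hqp)
  nlinarith [mul_le_mul_of_nonneg_right hfp (by linarith : (0:ℝ) ≤ q - t),
    mul_le_mul_of_nonneg_right hfq (by linarith : (0:ℝ) ≤ t - p), key]

lemma exists_cell {n : ℕ} (hn : 0 < n) (x : Fin (n+1) → ℝ) (hx : Monotone x)
    {t : ℝ} (h1 : x 0 ≤ t) (h2 : t ≤ x (Fin.last n)) :
    ∃ k : Fin n, x k.castSucc ≤ t ∧ t ≤ x k.succ := by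
  classical
  set P : ℕ → Prop := fun i => x ⟨min i n, by omega⟩ ≤ t with hP
  have hP0 : P 0 := by
    simpa [hP, Nat.min_eq_left (Nat.zero_le n)] using h1
  set K := Nat.findGreatest P (n-1) with hK
  have hKle : K ≤ n - 1 := Nat.findGreatest_le _
  have hPK : P K := Nat.findGreatest_spec (Nat.zero_le _) hP0
  refine ⟨⟨K, by omega⟩, ?_, ?_⟩
  · have he : (Fin.castSucc (⟨K, by omega⟩ : Fin n)) = ⟨min K n, by omega⟩ := by
      ext; simp; omega
    rw [he]; exact hPK
  · by_cases h : K = n - 1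
    · have he : (⟨K, by omega⟩ : Fin n).succ = Fin.last n := by
        ext; simp [Fin.val_succ]; omega
      rw [he]; exact h2
    · have hlt : K + 1 ≤ n - 1 := by omega
      have hnP := Nat.findGreatest_is_greatest (Nat.lt_succ_self K) hlt
      have he : (⟨K, by omega⟩ : Fin n).succ = ⟨min (K+1) n, by omega⟩ := by
        ext; simp [Fin.val_succ]; omega
      rw [he]
      exact le_of_not_ge hnP

theorem concave_pwa_underapproximation
    (a b : ℝ) (hab : a < b) (f : ℝ → ℝ)
    (hcont : ContinuousOn f (Icc a b)) (hconc : ConcaveOn ℝ (Icc a b) f)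
    (ε : ℝ) (hε : 0 < ε) :
    ∃ z : ℕ, 0 < z ∧ ∃ x : Fin (z + 1) → ℝ, StrictMono x ∧
      x 0 = a ∧ x (Fin.last z) = b ∧
      ∀ t ∈ Icc a b,
        0 ≤ f t - (⨅ k : Fin z, (f (x k.castSucc) +
            (f (x k.succ) - f (x k.castSucc)) / (x k.succ - x k.castSucc) *
              (t - x k.castSucc))) ∧
        f t - (⨅ k : Fin z, (f (x k.castSucc) +
            (f (x k.succ) - f (x k.castSucc)) / (x k.succ - x k.castSucc) *
              (t - x k.castSucc))) ≤ ε := by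
  -- uniform continuity
  have hu : UniformContinuousOn f (Icc a b) :=
    isCompact_Icc.uniformContinuousOn_of_continuous hcont
  rw [Metric.uniformContinuousOn_iff] at hu
  obtain ⟨δ, hδ0, hδ⟩ := hu ε hε
  set z : ℕ := ⌈(b - a) / δ⌉₊ + 1 with hzdef
  have hz : 0 < z := Nat.succ_pos _
  have hzR : (0:ℝ) < z := by positivity
  set c : ℝ := (b - a) / z with hcdef
  have hc0 : 0 < c := div_pos (by linarith) hzR
  have hcδ : c < δ := by
    rw [hcdef, div_lt_iff₀ hzR]
    have h1 : (b - a) / δ ≤ (⌈(b - a) / δ⌉₊ : ℝ) := Nat.le_ceil _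
    have h2 : ((⌈(b - a) / δ⌉₊ : ℝ) + 1) = (z : ℝ) := by push_cast [hzdef]; ring
    have h3 : δ * ((b - a) / δ) = b - a := by field_simp
    have h4 : δ * (z : ℝ) = δ * (⌈(b - a) / δ⌉₊ : ℝ) + δ := by rw [← h2]; ring
    nlinarith [mul_le_mul_of_nonneg_left h1 hδ0.le]
  set x : Fin (z + 1) → ℝ := fun k => a + (k : ℝ) * c with hxdef
  have hxmono : StrictMono x := by
    intro k l hkl
    have : ((k : ℕ) : ℝ) < ((l : ℕ) : ℝ) := by exact_mod_cast hkl
    simp only [hxdef]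
    nlinarith
  have hx0 : x 0 = a := by simp [hxdef]
  have hxlast : x (Fin.last z) = b := by
    simp only [hxdef, Fin.val_last]
    rw [hcdef]; field_simp; ring
  refine ⟨z, hz, x, hxmono, hx0, hxlast, ?_⟩
  intro t ht
  haveI : Nonempty (Fin z) := ⟨⟨0, hz⟩⟩
  set L : Fin z → ℝ := fun k => f (x k.castSucc) +
      (f (x k.succ) - f (x k.castSucc)) / (x k.succ - x k.castSucc) *
        (t - x k.castSucc) with hLdef
  -- basic facts about the nodes
  have hmem : ∀ k : Fin (z + 1), x k ∈ Icc a b := by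
    intro k
    have hk1 : (0:ℝ) ≤ (k : ℝ) := by positivity
    have hk2 : ((k : ℕ) : ℝ) ≤ (z : ℝ) := by
      exact_mod_cast Nat.le_of_lt_succ k.isLt
    constructor
    · simp only [hxdef]; nlinarith
    · simp only [hxdef]
      have : (k : ℝ) * c ≤ (z : ℝ) * c := by nlinarith
      have hzc : (z : ℝ) * c = b - a := by rw [hcdef]; field_simp
      linarith
  have hdiff : ∀ k : Fin z, x k.succ - x k.castSucc = c := by
    intro k
    simp only [hxdef, Fin.val_succ, Fin.coe_castSucc]
    push_cast; ring
  have hlt : ∀ k : Fin z, x k.castSucc < x k.succ := by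
    intro k; have := hdiff k; linarith
  have hbdd : BddBelow (Set.range L) := (Set.finite_range L).bddBelow
  -- locate t
  have hta : x 0 ≤ t := by rw [hx0]; exact ht.1
  have htb : t ≤ x (Fin.last z) := by rw [hxlast]; exact ht.2
  obtain ⟨k₀, hk₀1, hk₀2⟩ := exists_cell hz x hxmono.monotone hta htb
  constructor
  · -- lower bound: inf L ≤ f t
    have h1 : (⨅ k, L k) ≤ L k₀ := ciInf_le hbdd k₀
    have h2 : L k₀ ≤ f t :=
      secant_le_of_concave hconc (hmem _) (hmem _) (hlt k₀) hk₀1 hk₀2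
    linarith
  · -- upper bound: f t - ε ≤ L j for all j
    have h1 : f t - ε ≤ ⨅ k, L k := by
      apply le_ciInf
      intro j
      rcases lt_or_ge t (x j.castSucc) with hcase | hcase
      · have := secant_ge_of_concave_left hconc (hmem _) (hmem _) ht (hlt j) hcase.le
        simp only [hLdef]; linarith
      rcases lt_or_ge (x j.succ) t with hcase2 | hcase2
      · have := secant_ge_of_concave_right hconc (hmem _) (hmem _) ht (hlt j) hcase2.le
        simp only [hLdef]; linarith
      · -- t inside the cell: use uniform continuity
        have hd1 : dist t (x j.castSucc) < δ := by
          rw [Real.dist_eq, abs_of_nonneg (by linarith)]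
          have := hdiff j; linarith
        have hd2 : dist t (x j.succ) < δ := by
          rw [Real.dist_eq, abs_of_nonpos (by linarith)]
          have := hdiff j; linarith
        have hf1 : dist (f t) (f (x j.castSucc)) < ε := hδ t ht _ (hmem _) hd1
        have hf2 : dist (f t) (f (x j.succ)) < ε := hδ t ht _ (hmem _) hd2
        rw [Real.dist_eq] at hf1 hf2
        have hb1 : f t - f (x j.castSucc) ≤ ε := by
          have := abs_le.mp hf1.le; linarith [this.2]
        have hb2 : f t - f (x j.succ) ≤ ε := by
          have := abs_le.mp hf2.le; linarith [this.2]
        have := secant_close (hlt j) hcase hcase2 hb1 hb2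
        simp only [hLdef]; linarith
    linarith
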